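/- Suppose X ∈ ℝ^{N×N} is symmetric, X > 0, I + G X is invertible, and X satisfies the DARE X = Aᵀ X (I + G X)⁻¹ A + H. Let S = (I + G X)⁻¹ A and let (A_k, G_k, H_k) be generated by the SDA with A₀ = A, G₀ = G, H₀ = H (assuming all required inverses exist). Then for every k ≥ 0, A_k = (I + G_k X) S^{2^k}. -/

import Mathlib

open Matrix

/-- The structure-preserving doubling algorithm (SDA) iteration:
`SDA A G H k = (A_k, G_k, H_k)`. -/
noncomputable def SDA {N : ℕ} (A G H : Matrix (Fin N) (Fin N) ℝ) :
    ℕ → Matrix (Fin N) (Fin N) ℝ × Matrix (Fin N) (Fin N) ℝ × Matrix (Fin N) (Fin N) ℝ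
  | 0 => (A, G, H)
  | k + 1 =>
      let p := SDA A G H k
      (p.1 * (1 + p.2.1 * p.2.2)⁻¹ * p.1,
       p.2.1 + p.1 * (1 + p.2.1 * p.2.2)⁻¹ * p.2.1 * p.1ᵀ,
       p.2.2 + p.1ᵀ * p.2.2 * (1 + p.2.1 * p.2.2)⁻¹ * p.1)

theorem sda_key {N : ℕ} (A G H X : Matrix (Fin N) (Fin N) ℝ)
    (hGsym : Gᵀ = G) (hHsym : Hᵀ = H)
    (hXsym : Xᵀ = X)
    (hGX : IsUnit (1 + G * X).det)
    (hDARE : X = Aᵀ * X * (1 + G * X)⁻¹ * A + H)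
    (hinv : ∀ k, IsUnit (1 + (SDA A G H k).2.1 * (SDA A G H k).2.2).det) :
    ∀ k, (SDA A G H k).2.1ᵀ = (SDA A G H k).2.1 ∧
         (SDA A G H k).2.2ᵀ = (SDA A G H k).2.2 ∧
         (SDA A G H k).1 = (1 + (SDA A G H k).2.1 * X) * ((1 + G * X)⁻¹ * A) ^ (2 ^ k) ∧
         X - (SDA A G H k).2.2 = (SDA A G H k).1ᵀ * X * ((1 + G * X)⁻¹ * A) ^ (2 ^ k) := by
  intro k
  induction k with
  | zero =>
    refine ⟨hGsym, hHsym, ?_, ?_⟩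
    · show A = (1 + G * X) * ((1 + G * X)⁻¹ * A) ^ (2 ^ 0)
      rw [pow_zero, pow_one, ← mul_assoc, mul_nonsing_inv _ hGX, one_mul]
    · show X - H = Aᵀ * X * ((1 + G * X)⁻¹ * A) ^ (2 ^ 0)
      rw [pow_zero, pow_one, sub_eq_iff_eq_add, ← mul_assoc]
      rw [mul_assoc, mul_assoc] at hDARE ⊢
      exact hDARE
  | succ k ih =>
    obtain ⟨hGs, hHs, hA, hHinv⟩ := ih
    simp only [SDA]
    set Ak := (SDA A G H k).1 with hAk
    set Gk := (SDA A G H k).2.1 with hGk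
    set Hk := (SDA A G H k).2.2 with hHk
    set S := (1 + G * X)⁻¹ * A with hS
    set W := S ^ (2 ^ k) with hW
    set M := 1 + Gk * Hk with hM
    set Nm := 1 + Hk * Gk with hNm
    have hMdet : IsUnit M.det := hinv k
    have hNdet : IsUnit Nm.det := by
      have h : Nm = Hk * Gk + 1 := by rw [hNm, add_comm]
      rw [h, Matrix.det_mul_add_one_comm, add_comm]
      exact hMdet
    have hMM : M⁻¹ * M = 1 := nonsing_inv_mul _ hMdet
    have hMM' : M * M⁻¹ = 1 := mul_nonsing_inv _ hMdet
    have hNN : Nm⁻¹ * Nm = 1 := nonsing_inv_mul _ hNdet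
    have hNN' : Nm * Nm⁻¹ = 1 := mul_nonsing_inv _ hNdet
    have hMT : Mᵀ = Nm := by
      rw [hM, hNm, transpose_add, transpose_one, transpose_mul, hGs, hHs]
    have hMinvT : (M⁻¹)ᵀ = Nm⁻¹ := by
      rw [transpose_nonsing_inv, hMT]
    have hGN : Gk * Nm⁻¹ = M⁻¹ * Gk := by
      have h1 : Gk * Nm = M * Gk := by
        rw [hM, hNm]; noncomm_ring
      calc Gk * Nm⁻¹ = M⁻¹ * (M * Gk) * Nm⁻¹ := by rw [← mul_assoc, hMM, one_mul]
        _ = M⁻¹ * (Gk * Nm) * Nm⁻¹ := by rw [h1]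
        _ = M⁻¹ * Gk * (Nm * Nm⁻¹) := by rw [mul_assoc, mul_assoc, mul_assoc]
        _ = M⁻¹ * Gk := by rw [hNN', mul_one]
    have hHN : Hk * M⁻¹ = Nm⁻¹ * Hk := by
      have h1 : Nm * Hk = Hk * M := by
        rw [hM, hNm]; noncomm_ring
      calc Hk * M⁻¹ = Nm⁻¹ * (Nm * Hk) * M⁻¹ := by rw [← mul_assoc, hNN, one_mul]
        _ = Nm⁻¹ * (Hk * M) * M⁻¹ := by rw [h1]
        _ = Nm⁻¹ * Hk * (M * M⁻¹) := by rw [mul_assoc, mul_assoc, mul_assoc]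
        _ = Nm⁻¹ * Hk := by rw [hMM', mul_one]
    have hHkEq : Hk = X - Akᵀ * X * W := by
      rw [← hHinv, sub_sub_cancel]
    -- key fact: Ak = M * W + Gk * (Akᵀ * X * (W * W))
    have fact1 : Ak = M * W + Gk * (Akᵀ * X * (W * W)) := by
      have h : M * W + Gk * (Akᵀ * X * (W * W)) =
          (1 + Gk * (X - Akᵀ * X * W)) * W + Gk * (Akᵀ * X * (W * W)) := by
        rw [hM, ← hHkEq]
      rw [h]
      nth_rewrite 1 [hA]
      noncomm_ring
    have fact2 : M⁻¹ * Ak = W + M⁻¹ * (Gk * (Akᵀ * X * (W * W))) := by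
      nth_rewrite 1 [fact1]
      rw [mul_add, ← mul_assoc, hMM, one_mul]
    have hW2 : S ^ (2 ^ (k + 1)) = W * W := by
      rw [hW, ← pow_add]
      congr 1
      ring
    refine ⟨?_, ?_, ?_, ?_⟩
    · -- symmetry of G_{k+1}
      show (Gk + Ak * M⁻¹ * Gk * Akᵀ)ᵀ = Gk + Ak * M⁻¹ * Gk * Akᵀ
      rw [transpose_add, transpose_mul, transpose_mul, transpose_mul, transpose_transpose,
        hGs, hMinvT]
      congr 1
      rw [← mul_assoc Gk Nm⁻¹, hGN]
      noncomm_ring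
    · -- symmetry of H_{k+1}
      show (Hk + Akᵀ * Hk * M⁻¹ * Ak)ᵀ = Hk + Akᵀ * Hk * M⁻¹ * Ak
      rw [transpose_add, transpose_mul, transpose_mul, transpose_mul, transpose_transpose,
        hHs, hMinvT]
      congr 1
      rw [← mul_assoc Nm⁻¹ Hk, ← hHN]
      noncomm_ring
    · -- A invariant
      show Ak * M⁻¹ * Ak = (1 + (Gk + Ak * M⁻¹ * Gk * Akᵀ) * X) * S ^ (2 ^ (k + 1))
      rw [hW2]
      calc Ak * M⁻¹ * Ak = Ak * (M⁻¹ * Ak) := by rw [mul_assoc]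
        _ = Ak * (W + M⁻¹ * (Gk * (Akᵀ * X * (W * W)))) := by rw [fact2]
        _ = Ak * W + Ak * M⁻¹ * Gk * Akᵀ * X * (W * W) := by noncomm_ring
        _ = (1 + Gk * X) * W * W + Ak * M⁻¹ * Gk * Akᵀ * X * (W * W) := by
            nth_rewrite 1 [hA]; noncomm_ring
        _ = (1 + (Gk + Ak * M⁻¹ * Gk * Akᵀ) * X) * (W * W) := by noncomm_ring
    · -- H invariant
      show X - (Hk + Akᵀ * Hk * M⁻¹ * Ak) =
        (Ak * M⁻¹ * Ak)ᵀ * X * S ^ (2 ^ (k + 1))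
      rw [hW2, transpose_mul, transpose_mul, hMinvT]
      have key : X * W - Nm⁻¹ * Hk * Ak = Nm⁻¹ * (Akᵀ * X * W * W) := by
        have h1 : Nm * (X * W) - Hk * Ak = Akᵀ * X * W * W := by
          have h : Nm * (X * W) - Hk * Ak =
              (1 + Hk * Gk) * (X * W) - Hk * ((1 + Gk * X) * W) := by rw [hNm]; nth_rewrite 1 [hA]; rfl
          rw [h]
          have h2 : (1 + Hk * Gk) * (X * W) - Hk * ((1 + Gk * X) * W) = (X - Hk) * W := by
            noncomm_ring
          rw [h2, hHinv]
        calc X * W - Nm⁻¹ * Hk * Ak = Nm⁻¹ * (Nm * (X * W) - Hk * Ak) := by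
              rw [mul_sub, ← mul_assoc, hNN, one_mul, mul_assoc]
          _ = Nm⁻¹ * (Akᵀ * X * W * W) := by rw [h1]
      have lhs : X - (Hk + Akᵀ * Hk * M⁻¹ * Ak) = Akᵀ * (X * W - Nm⁻¹ * Hk * Ak) := by
        have e1 : X - (Hk + Akᵀ * Hk * M⁻¹ * Ak) = (X - Hk) - Akᵀ * (Hk * M⁻¹) * Ak := by
          noncomm_ring
        rw [e1, hHN, hHinv]
        noncomm_ring
      rw [lhs, key]
      noncomm_ring

theorem sda_Ak_eq {N : ℕ} (A G H X : Matrix (Fin N) (Fin N) ℝ)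
    (hG : G.PosSemidef) (hH : H.PosSemidef)
    (hX : X.PosDef) (hXsym : X.IsSymm)
    (hGX : IsUnit (1 + G * X).det)
    (hDARE : X = Aᵀ * X * (1 + G * X)⁻¹ * A + H)
    (hinv : ∀ k, IsUnit (1 + (SDA A G H k).2.1 * (SDA A G H k).2.2).det) :
    ∀ k, (SDA A G H k).1 = (1 + (SDA A G H k).2.1 * X) * ((1 + G * X)⁻¹ * A) ^ (2 ^ k) := by
  have hGsym : Gᵀ = G := by
    have h := hG.isHermitian
    simpa [Matrix.IsHermitian, Matrix.conjTranspose_eq_transpose_of_trivial] using h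
  have hHsym : Hᵀ = H := by
    have h := hH.isHermitian
    simpa [Matrix.IsHermitian, Matrix.conjTranspose_eq_transpose_of_trivial] using h
  intro k
  exact (sda_key A G H X hGsym hHsym hXsym hGX hDARE hinv k).2.2.1
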